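/- arXiv:1003.3386 — 3 statements merged into one kernel-verified Lean document; each statement's English description precedes it below -/
import Mathlib

section
/- Let k_1, k_2 be positive integers, let i_1, i_2 be nonnegative integers, and let r be an integer with 1 ≤ r ≤ k_1·k_2. Suppose π_0 = (t_1, t_2, …, t_{k_1}) ∈ P(k_1,k_2,r) attains the minimum of ∇ over P(k_1,k_2,r), and set m = t_1. Let π = (m, m, …, m, u, 0, …, 0) ∈ P(k_1,k_2,r) be the (k_1,k_2)-partition of r all of whose nonzero parts equal m except possibly the last nonzero part u, where 0 < u ≤ m. Then ∇(π_0) = ∇(π). -/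
/-- If `π₀ = (t₁,…,t_{k₁}) ∈ P(k₁,k₂,r)` minimizes `∇` over all `(k₁,k₂)`-partitions of `r`,
`m = t₁`, and `π = (m,…,m,u,0,…,0) ∈ P(k₁,k₂,r)` is the partition all of whose nonzero parts
equal `m` except possibly the last nonzero part `u` with `0 < u ≤ m`, then `∇(π₀) = ∇(π)`.
Here `w 0 = 0`, `w t = i₂ + t` for `t ≥ 1`, and
`∇(π) = (i₁+1)·w(π₁) + Σ_{i=2}^{k₁} w(π_i)`. -/
theorem stmt_14 (k₁ k₂ : ℕ) (hk₁ : 0 < k₁) (hk₂ : 0 < k₂) (i₁ i₂ : ℕ)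
    (r : ℕ) (hr₁ : 1 ≤ r) (hr₂ : r ≤ k₁ * k₂)
    (w : ℕ → ℕ) (hw0 : w 0 = 0) (hw : ∀ t, 1 ≤ t → w t = i₂ + t)
    (nabla : (Fin k₁ → ℕ) → ℕ)
    (hnabla : ∀ π : Fin k₁ → ℕ,
      nabla π = (i₁ + 1) * w (π ⟨0, hk₁⟩) +
        ∑ i ∈ Finset.univ.erase ⟨0, hk₁⟩, w (π i))
    (π₀ : Fin k₁ → ℕ) (hπ₀anti : Antitone π₀) (hπ₀sum : ∑ i, π₀ i = r)
    (hπ₀le : ∀ i, π₀ i ≤ k₂)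
    (hπ₀min : ∀ π : Fin k₁ → ℕ, Antitone π → (∑ i, π i = r) → (∀ i, π i ≤ k₂) →
      nabla π₀ ≤ nabla π)
    (m : ℕ) (hm : m = π₀ ⟨0, hk₁⟩)
    (π : Fin k₁ → ℕ) (hπanti : Antitone π) (hπsum : ∑ i, π i = r) (hπle : ∀ i, π i ≤ k₂)
    (u e : ℕ) (hu0 : 0 < u) (hum : u ≤ m)
    (hshape : ∀ i : Fin k₁,
      ((i : ℕ) < e → π i = m) ∧ ((i : ℕ) = e → π i = u) ∧ (e < (i : ℕ) → π i = 0)) :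
    nabla π₀ = nabla π := by
  classical
  have hm0 : 0 < m := lt_of_lt_of_le hu0 hum
  -- w is monotone
  have hwmono : ∀ a b : ℕ, a ≤ b → w a ≤ w b := by
    intro a b hab
    rcases Nat.eq_zero_or_pos a with ha | ha
    · rw [ha, hw0]; exact Nat.zero_le _
    · rw [hw a ha, hw b (le_trans ha hab)]; omega
  -- nabla formula
  have key : ∀ π' : Fin k₁ → ℕ,
      nabla π' = i₁ * w (π' ⟨0, hk₁⟩) +
        (i₂ * (Finset.univ.filter (fun i => π' i ≠ 0)).card + ∑ i, π' i) := by
    intro π'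
    rw [hnabla]
    have h2 : w (π' ⟨0, hk₁⟩) + ∑ i ∈ Finset.univ.erase ⟨0, hk₁⟩, w (π' i)
        = ∑ i, w (π' i) :=
      Finset.add_sum_erase Finset.univ (fun i => w (π' i)) (Finset.mem_univ _)
    have h1 : ∑ i, w (π' i)
        = i₂ * (Finset.univ.filter (fun i => π' i ≠ 0)).card + ∑ i, π' i := by
      have hpt : ∀ i : Fin k₁, w (π' i) = (if π' i ≠ 0 then i₂ else 0) + π' i := by
        intro i
        by_cases h : π' i = 0
        · simp [h, hw0]
        · simp [h, hw _ (Nat.one_le_iff_ne_zero.mpr h)]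
      rw [Finset.sum_congr rfl (fun i _ => hpt i), Finset.sum_add_distrib]
      congr 1
      have : ∑ i : Fin k₁, (if π' i ≠ 0 then i₂ else 0)
          = ∑ _i ∈ Finset.univ.filter (fun i => π' i ≠ 0), i₂ :=
        (Finset.sum_filter _ _).symm
      rw [this, Finset.sum_const, smul_eq_mul, Nat.mul_comm]
    calc (i₁ + 1) * w (π' ⟨0, hk₁⟩) + ∑ i ∈ Finset.univ.erase ⟨0, hk₁⟩, w (π' i)
        = i₁ * w (π' ⟨0, hk₁⟩) +
          (w (π' ⟨0, hk₁⟩) + ∑ i ∈ Finset.univ.erase ⟨0, hk₁⟩, w (π' i)) := by ring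
      _ = i₁ * w (π' ⟨0, hk₁⟩) + ∑ i, w (π' i) := by rw [h2]
      _ = _ := by rw [h1]
  set S : Finset (Fin k₁) := Finset.univ.filter (fun i => π i ≠ 0) with hS
  set S₀ : Finset (Fin k₁) := Finset.univ.filter (fun i => π₀ i ≠ 0) with hS₀
  -- first entries
  have hbot : ∀ i : Fin k₁, (⟨0, hk₁⟩ : Fin k₁) ≤ i := by
    intro i; simp [Fin.le_def]
  have hπ0le : π ⟨0, hk₁⟩ ≤ m := by
    obtain ⟨h1, h2, h3⟩ := hshape ⟨0, hk₁⟩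
    rcases Nat.eq_zero_or_pos e with he | he
    · rw [h2 he.symm]; exact hum
    · rw [h1 he]
  -- r ≤ S₀.card * m
  have hπ₀m : ∀ i, π₀ i ≤ m := by
    intro i; rw [hm]; exact hπ₀anti (hbot i)
  have hrS₀ : r ≤ S₀.card * m := by
    calc r = ∑ i, π₀ i := hπ₀sum.symm
      _ = ∑ i ∈ S₀, π₀ i := (Finset.sum_filter_ne_zero _).symm
      _ ≤ ∑ _i ∈ S₀, m := Finset.sum_le_sum (fun i _ => hπ₀m i)
      _ = S₀.card * m := by rw [Finset.sum_const, smul_eq_mul]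
  -- elements of S are ≤ e
  have hSmem : ∀ i ∈ S, (i : ℕ) < e ∨ (i : ℕ) = e := by
    intro i hi
    simp only [hS, Finset.mem_filter] at hi
    obtain ⟨_, _, h3⟩ := hshape i
    rcases Nat.lt_trichotomy (i : ℕ) e with h | h | h
    · exact Or.inl h
    · exact Or.inr h
    · exact absurd (h3 h) hi.2
  have hπileS : ∀ i ∈ S, π i ≤ m := by
    intro i hi
    obtain ⟨h1, h2, _⟩ := hshape i
    rcases hSmem i hi with h | h
    · rw [h1 h]
    · rw [h2 h]; exact hum
  -- S.card * m ≤ r + (m - u)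
  have hScard : S.card * m ≤ r + (m - u) := by
    have e1 : S.card * m = ∑ _i ∈ S, m := by rw [Finset.sum_const, smul_eq_mul]
    have e2 : ∑ _i ∈ S, m = ∑ i ∈ S, (π i + (m - π i)) :=
      Finset.sum_congr rfl (fun i hi => by have := hπileS i hi; omega)
    have e3 : ∑ i ∈ S, π i = r := by
      rw [hS, Finset.sum_filter_ne_zero, hπsum]
    have e4 : ∑ i ∈ S, (m - π i) ≤ m - u := by
      have step : ∑ i ∈ S, (m - π i)
          ≤ ∑ i ∈ S, (if (i : ℕ) = e then m - u else 0) := by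
        apply Finset.sum_le_sum
        intro i hi
        obtain ⟨h1, h2, _⟩ := hshape i
        rcases hSmem i hi with h | h
        · rw [h1 h]; simp [Nat.ne_of_lt h]
        · rw [h2 h]; simp [h]
      have step2 : ∑ i ∈ S, (if (i : ℕ) = e then m - u else 0)
          = (S.filter (fun i => Fin.val i = e)).card * (m - u) := by
        rw [← Finset.sum_filter, Finset.sum_const, smul_eq_mul]
      have card1 : (S.filter (fun i => Fin.val i = e)).card ≤ 1 := by
        apply Finset.card_le_one.mpr
        intro a ha b hb
        simp only [Finset.mem_filter] at ha hb
        exact Fin.val_injective (by rw [ha.2, hb.2])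
      calc ∑ i ∈ S, (m - π i) ≤ _ := step
        _ = _ := step2
        _ ≤ 1 * (m - u) := Nat.mul_le_mul_right _ card1
        _ = m - u := one_mul _
    rw [e1, e2, Finset.sum_add_distrib, e3]
    omega
  -- S.card ≤ S₀.card
  have hcard : S.card ≤ S₀.card := by
    have h1 : S.card * m < (S₀.card + 1) * m := by
      have : m - u < m := Nat.sub_lt hm0 hu0
      calc S.card * m ≤ r + (m - u) := hScard
        _ < r + m := by omega
        _ ≤ S₀.card * m + m := by omega
        _ = (S₀.card + 1) * m := by ring
    have := Nat.lt_of_mul_lt_mul_right h1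
    omega
  -- conclude
  apply le_antisymm (hπ₀min π hπanti hπsum hπle)
  rw [key π, key π₀, hπsum, hπ₀sum]
  have hA : w (π ⟨0, hk₁⟩) ≤ w (π₀ ⟨0, hk₁⟩) := by
    apply hwmono; rw [← hm]; exact hπ0le
  exact Nat.add_le_add (Nat.mul_le_mul_left _ hA)
    (Nat.add_le_add_right (Nat.mul_le_mul_left _ hcard) _)
end

section
/- Let k_1, k_2 be positive integers, let i_1, i_2 be nonnegative integers, and let r, α be integers with α ≥ 0 and α·k_1 < r ≤ (α + 1)·k_1 and r ≤ k_1·k_2. Let S be the set of all partitions in P(k_1,k_2,r) of the form (β, β, …, β, u_β, 0, …, 0) — all nonzero parts equal to β except possibly the last nonzero part u_β with 0 < u_β ≤ β — for some β with α + 1 ≤ β ≤ min{k_2, r}. Then min { ∇(π) : π ∈ P(k_1,k_2,r) } = min { ∇(π) : π ∈ S }. -/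
/-- Let `α·k₁ < r ≤ (α+1)·k₁` and `r ≤ k₁·k₂`. The minimum of `∇` over all
`(k₁,k₂)`-partitions of `r` equals the minimum of `∇` over the set `S` of partitions of the
form `(β,…,β,u_β,0,…,0)` (all nonzero parts equal `β` except possibly the last nonzero part
`u_β` with `0 < u_β ≤ β`) with `α + 1 ≤ β ≤ min(k₂, r)`.
Here `w 0 = 0`, `w t = i₂ + t` for `t ≥ 1`, and
`∇(π) = (i₁+1)·w(π₁) + Σ_{i=2}^{k₁} w(π_i)`. -/
theorem stmt_15 (k₁ k₂ : ℕ) (hk₁ : 0 < k₁) (hk₂ : 0 < k₂) (i₁ i₂ : ℕ)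
    (r α : ℕ) (hrα : α * k₁ < r) (hrα' : r ≤ (α + 1) * k₁) (hr : r ≤ k₁ * k₂)
    (w : ℕ → ℕ) (hw0 : w 0 = 0) (hw : ∀ t, 1 ≤ t → w t = i₂ + t)
    (nabla : (Fin k₁ → ℕ) → ℕ)
    (hnabla : ∀ π : Fin k₁ → ℕ,
      nabla π = (i₁ + 1) * w (π ⟨0, hk₁⟩) +
        ∑ i ∈ Finset.univ.erase ⟨0, hk₁⟩, w (π i)) :
    sInf {v : ℕ | ∃ π : Fin k₁ → ℕ, Antitone π ∧ (∑ i, π i = r) ∧ (∀ i, π i ≤ k₂) ∧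
        v = nabla π} =
      sInf {v : ℕ | ∃ π : Fin k₁ → ℕ, Antitone π ∧ (∑ i, π i = r) ∧ (∀ i, π i ≤ k₂) ∧
        (∃ β u e : ℕ, α + 1 ≤ β ∧ β ≤ min k₂ r ∧ 0 < u ∧ u ≤ β ∧
          ∀ i : Fin k₁,
            ((i : ℕ) < e → π i = β) ∧ ((i : ℕ) = e → π i = u) ∧ (e < (i : ℕ) → π i = 0)) ∧
        v = nabla π} := by
  classical
  have r_pos : 0 < r := lt_of_le_of_lt (Nat.zero_le _) hrα
  set z : Fin k₁ := ⟨0, hk₁⟩ with hz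
  set A := {v : ℕ | ∃ π : Fin k₁ → ℕ, Antitone π ∧ (∑ i, π i = r) ∧ (∀ i, π i ≤ k₂) ∧
      v = nabla π} with hA
  set B := {v : ℕ | ∃ π : Fin k₁ → ℕ, Antitone π ∧ (∑ i, π i = r) ∧ (∀ i, π i ≤ k₂) ∧
      (∃ β u e : ℕ, α + 1 ≤ β ∧ β ≤ min k₂ r ∧ 0 < u ∧ u ≤ β ∧
        ∀ i : Fin k₁,
          ((i : ℕ) < e → π i = β) ∧ ((i : ℕ) = e → π i = u) ∧ (e < (i : ℕ) → π i = 0)) ∧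
      v = nabla π} with hB
  -- generic formula for nabla
  have hnabla' : ∀ π : Fin k₁ → ℕ,
      nabla π = i₁ * w (π z) + ∑ i, w (π i) := by
    intro π
    have h := Finset.add_sum_erase Finset.univ (fun i => w (π i)) (Finset.mem_univ z)
    rw [hnabla, ← h]
    ring
  -- sum of weights in terms of number of nonzero parts
  have hwsum : ∀ π : Fin k₁ → ℕ,
      ∑ i, w (π i)
        = i₂ * (Finset.univ.filter (fun i => π i ≠ 0)).card + ∑ i, π i := by
    intro π
    have h1 : ∀ i : Fin k₁, w (π i) = (if π i ≠ 0 then i₂ else 0) + π i := by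
      intro i
      by_cases h : π i = 0
      · simp [h, hw0]
      · rw [hw _ (Nat.one_le_iff_ne_zero.2 h)]; simp [h]
    calc ∑ i, w (π i) = ∑ i, ((if π i ≠ 0 then i₂ else 0) + π i) :=
          Finset.sum_congr rfl fun i _ => h1 i
      _ = (∑ i, if π i ≠ 0 then i₂ else 0) + ∑ i, π i := Finset.sum_add_distrib
      _ = _ := by
          rw [← Finset.sum_filter]
          rw [Finset.sum_const, smul_eq_mul, mul_comm]
  -- construction of the canonical element of B for a given β
  have hcons : ∀ β : ℕ, α + 1 ≤ β → β ≤ k₂ → β ≤ r →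
      ∃ v ∈ B, v ≤ i₁ * (i₂ + β) + (i₂ * ((r - 1) / β + 1) + r) := by
    intro β hβα hβk hβr
    have hβpos : 0 < β := lt_of_lt_of_le (Nat.succ_pos α) hβα
    have hdm := Nat.div_add_mod (r - 1) β
    have hmod : (r - 1) % β < β := Nat.mod_lt _ hβpos
    set e := (r - 1) / β with he
    set q := (r - 1) % β with hq
    set u := q + 1 with hu
    have huβ : u ≤ β := by omega
    have hu1 : 1 ≤ u := by omega
    have hdecomp : β * e + u = r := by
      rw [hu, ← add_assoc, hdm]; omega
    have hek : e < k₁ := by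
      rw [he, Nat.div_lt_iff_lt_mul hβpos]
      have h2 : r ≤ β * k₁ := le_trans hrα' (Nat.mul_le_mul_right k₁ hβα)
      calc r - 1 < r := by omega
        _ ≤ k₁ * β := by rw [mul_comm]; exact h2
    set π' : Fin k₁ → ℕ :=
      fun i => if (i : ℕ) < e then β else if (i : ℕ) = e then u else 0 with hπ'
    have hπval : ∀ i : Fin k₁,
        π' i = if (i : ℕ) < e then β else if (i : ℕ) = e then u else 0 := fun i => rfl
    have hanti : Antitone π' := by
      intro a b hab
      have hab' : (a : ℕ) ≤ (b : ℕ) := hab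
      simp only [hπval]
      split_ifs <;> omega
    have hsum' : ∑ i, π' i = r := by
      have h0 : ∑ i : Fin k₁, π' i
          = ∑ i ∈ Finset.range k₁, (if i < e then β else if i = e then u else 0) :=
        Fin.sum_univ_eq_sum_range (fun n => if n < e then β else if n = e then u else 0) k₁
      rw [h0]
      rw [← Finset.sum_subset (Finset.range_subset_range.2 hek) (fun x hx hx' => ?_)]
      · rw [Finset.sum_range_succ]
        have h1 : ∀ i ∈ Finset.range e,
            (if i < e then β else if i = e then u else 0) = β := by
          intro i hi; rw [if_pos (Finset.mem_range.1 hi)]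
        rw [Finset.sum_congr rfl h1, Finset.sum_const, Finset.card_range, smul_eq_mul]
        have h2 : (if e < e then β else if e = e then u else 0) = u := by simp
        rw [h2, mul_comm]
        exact hdecomp
      · simp only [Finset.mem_range] at hx hx'
        rw [if_neg (by omega), if_neg (by omega)]
    have hbd' : ∀ i, π' i ≤ k₂ := by
      intro i
      simp only [hπval]
      split_ifs <;> omega
    have hwsum' : ∑ i, w (π' i) = i₂ * (e + 1) + r := by
      have h0 : ∑ i : Fin k₁, w (π' i)
          = ∑ i ∈ Finset.range k₁, w (if i < e then β else if i = e then u else 0) :=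
        Fin.sum_univ_eq_sum_range (fun i => w (if i < e then β else if i = e then u else 0)) k₁
      rw [h0]
      rw [← Finset.sum_subset (Finset.range_subset_range.2 hek) (fun x hx hx' => ?_)]
      · rw [Finset.sum_range_succ]
        have h1 : ∀ i ∈ Finset.range e,
            w (if i < e then β else if i = e then u else 0) = i₂ + β := by
          intro i hi; rw [if_pos (Finset.mem_range.1 hi), hw β hβpos]
        rw [Finset.sum_congr rfl h1, Finset.sum_const, Finset.card_range, smul_eq_mul]
        have h2 : (if e < e then β else if e = e then u else 0) = u := by simp
        rw [h2, hw u hu1]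
        have h3 : e * (i₂ + β) + (i₂ + u) = i₂ * (e + 1) + (β * e + u) := by ring
        rw [h3, hdecomp]
      · simp only [Finset.mem_range] at hx hx'
        rw [if_neg (by omega), if_neg (by omega), hw0]
    have htop : w (π' z) ≤ i₂ + β := by
      have hz0 : ((z : Fin k₁) : ℕ) = 0 := rfl
      by_cases h : 0 < e
      · have h4 : π' z = β := by rw [hπval, hz0, if_pos h]
        rw [h4, hw β hβpos]
      · have he0 : e = 0 := Nat.eq_zero_of_not_pos h
        have h4 : π' z = u := by rw [hπval, hz0, if_neg h, if_pos he0.symm]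
        rw [h4, hw u hu1]
        exact Nat.add_le_add_left huβ i₂
    have hnb : nabla π' ≤ i₁ * (i₂ + β) + (i₂ * (e + 1) + r) := by
      rw [hnabla', hwsum']
      exact Nat.add_le_add_right (Nat.mul_le_mul_left _ htop) _
    refine ⟨nabla π', ?_, hnb⟩
    rw [hB]
    refine ⟨π', hanti, hsum', hbd', ⟨β, u, e, hβα, le_min hβk hβr, hu1, huβ, ?_⟩, rfl⟩
    intro i
    refine ⟨fun h => ?_, fun h => ?_, fun h => ?_⟩
    · rw [hπval, if_pos h]
    · rw [hπval, if_neg (by omega), if_pos h]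
    · rw [hπval, if_neg (by omega), if_neg (by omega)]
  -- B is a subset of A
  have hBsub : B ⊆ A := by
    intro v hv
    obtain ⟨π, h1, h2, h3, _, h5⟩ := hv
    exact ⟨π, h1, h2, h3, h5⟩
  -- the key comparison: every element of A is dominated by an element of B
  have key : ∀ v ∈ A, ∃ v' ∈ B, v' ≤ v := by
    intro v hv
    obtain ⟨π, hanti, hsum, hbd, rfl⟩ := hv
    set β := π z with hβ
    have hβtop : ∀ i, π i ≤ β := by
      intro i
      exact hanti (show z ≤ i from Fin.le_def.2 (Nat.zero_le _))
    have hrk : r ≤ k₁ * β := by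
      calc r = ∑ i, π i := hsum.symm
        _ ≤ Finset.univ.card • β := Finset.sum_le_card_nsmul _ _ _ (fun i _ => hβtop i)
        _ = k₁ * β := by simp [Finset.card_univ, mul_comm]
    have hβα : α + 1 ≤ β := by
      have h4 : k₁ * α < k₁ * β := by
        rw [mul_comm k₁ α]
        exact lt_of_lt_of_le hrα hrk
      exact Nat.lt_of_mul_lt_mul_left h4
    have hβpos : 0 < β := by omega
    have hβr : β ≤ r := by
      rw [← hsum]
      exact Finset.single_le_sum (fun i _ => Nat.zero_le _) (Finset.mem_univ z)
    have hβk : β ≤ k₂ := hbd z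
    obtain ⟨v', hv'B, hv'le⟩ := hcons β hβα hβk hβr
    refine ⟨v', hv'B, le_trans hv'le ?_⟩
    set m := (Finset.univ.filter (fun i : Fin k₁ => π i ≠ 0)).card with hm
    have hrm : r ≤ m * β := by
      have h1 : ∑ i ∈ Finset.univ.filter (fun i : Fin k₁ => π i ≠ 0), π i = r := by
        rw [Finset.sum_filter_ne_zero, hsum]
      calc r = _ := h1.symm
        _ ≤ m • β := Finset.sum_le_card_nsmul _ _ _ (fun i _ => hβtop i)
        _ = m * β := by rw [smul_eq_mul]
    have hem : (r - 1) / β + 1 ≤ m := by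
      have h2 : (r - 1) / β < m := by
        rw [Nat.div_lt_iff_lt_mul hβpos]
        exact lt_of_lt_of_le (by omega) hrm
      omega
    have hnπ : nabla π = i₁ * (i₂ + β) + (i₂ * m + r) := by
      rw [hnabla' π, hwsum π, hsum, ← hβ, hw β hβpos, ← hm]
    rw [hnπ]
    exact Nat.add_le_add_left
      (Nat.add_le_add_right (Nat.mul_le_mul_left _ hem) r) _
  -- nonemptiness
  have hαk₂ : α + 1 ≤ k₂ := by
    have h1 : α * k₁ < k₁ * k₂ := lt_of_lt_of_le hrα hr
    rw [mul_comm] at h1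
    exact Nat.lt_of_mul_lt_mul_left h1
  have hαr : α + 1 ≤ r := by
    have h1 : α ≤ α * k₁ := Nat.le_mul_of_pos_right α hk₁
    omega
  obtain ⟨v₀, hv₀B, _⟩ := hcons (α + 1) le_rfl hαk₂ hαr
  have hBne : B.Nonempty := ⟨v₀, hv₀B⟩
  have hAne : A.Nonempty := ⟨v₀, hBsub hv₀B⟩
  apply le_antisymm
  · exact Nat.sInf_le (hBsub (Nat.sInf_mem hBne))
  · obtain ⟨v', hv'B, hle⟩ := key _ (Nat.sInf_mem hAne)
    exact le_trans (Nat.sInf_le hv'B) hle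
end

section
/- Let p be a prime, F_q a finite field of characteristic p, s_1,…,s_n positive integers, and m_1,…,m_n positive integers with m_j ≤ p^{s_j} for all j. Let C = ⟨(x_1 − 1)^{m_1}···(x_n − 1)^{m_n}⟩ ⊆ R = F_q[x_1,…,x_n]/⟨x_1^{p^{s_1}} − 1, …, x_n^{p^{s_n}} − 1⟩. For each ℓ ∈ {1,…,n} let Q_ℓ = { a = (a_1,…,a_n) ∈ ℕ^n : 0 ≤ a_ℓ < m_ℓ and 0 ≤ a_j < p^{s_j} for all j ≠ ℓ }, and let Q = Q_1 ∪ ⋯ ∪ Q_n. Then for any polynomial g ∈ F_q[x_1,…,x_n] whose degree in each variable x_j is less than p^{s_j}, the class of g in R belongs to C if and only if D^{[a]}(g)(1,…,1) = 0 for all a ∈ Q. -/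
open MvPolynomial Finset

variable {F : Type} [CommRing F] {n : ℕ}

lemma X_add_one_pow (i : Fin n) (d : ℕ) :
    (X i + 1 : MvPolynomial (Fin n) F) ^ d =
      ∑ k ∈ Finset.range (d + 1), monomial (Finsupp.single i k) ((d.choose k : F)) := by
  rw [add_pow]
  refine Finset.sum_congr rfl fun k hk => ?_
  rw [one_pow, X_pow_eq_monomial, mul_one]
  rw [show ((d.choose k : ℕ) : MvPolynomial (Fin n) F) = C ((d.choose k : ℕ) : F) by simp]
  rw [mul_comm, C_mul_monomial, mul_one]

lemma coeff_prod_X_add_one_pow (S : Finset (Fin n)) (d : Fin n → ℕ) (a : Fin n →₀ ℕ) :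
    coeff a (∏ j ∈ S, (X j + 1 : MvPolynomial (Fin n) F) ^ d j) =
      if ∀ j, a j ≠ 0 → j ∈ S then ∏ j ∈ S, ((d j).choose (a j) : F) else 0 := by
  classical
  induction S using Finset.induction_on generalizing a with
  | empty =>
    simp only [Finset.prod_empty, Finset.notMem_empty]
    rw [coeff_one]
    by_cases h : a = 0
    · subst h; simp
    · rw [if_neg (Ne.symm h), if_neg]
      push_neg
      obtain ⟨j, hj⟩ := Finsupp.ne_iff.mp h
      exact ⟨j, hj, trivial⟩
  | @insert i S hiS ih =>
    rw [Finset.prod_insert hiS, mul_comm, X_add_one_pow, Finset.mul_sum, coeff_sum]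
    have hterm : ∀ k ∈ Finset.range (d i + 1),
        coeff a ((∏ j ∈ S, (X j + 1 : MvPolynomial (Fin n) F) ^ d j) *
          monomial (Finsupp.single i k) ((d i).choose k : F)) =
        if k = a i then
          (if ∀ j ≠ i, a j ≠ 0 → j ∈ S then
            (∏ j ∈ S, ((d j).choose (a j) : F)) * ((d i).choose (a i) : F) else 0)
        else 0 := by
      intro k hk
      rw [coeff_mul_monomial']
      by_cases hka : k = a i
      · subst hka
        rw [if_pos (Finsupp.single_le_iff.mpr le_rfl), ih]
        by_cases hP : ∀ j ≠ i, a j ≠ 0 → j ∈ S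
        · rw [if_pos, if_pos hP, if_pos rfl]
          · congr 1
            refine Finset.prod_congr rfl fun j hj => ?_
            have : j ≠ i := fun h => hiS (h ▸ hj)
            rw [Finsupp.tsub_apply, Finsupp.single_apply, if_neg (Ne.symm this), Nat.sub_zero]
          · intro j hj
            by_cases hji : j = i
            · exfalso; apply hj; subst hji
              rw [Finsupp.tsub_apply, Finsupp.single_apply, if_pos rfl, Nat.sub_self]
            · refine hP j hji ?_
              rwa [Finsupp.tsub_apply, Finsupp.single_apply, if_neg (Ne.symm hji),
                Nat.sub_zero] at hj
        · rw [if_neg, if_neg hP, if_pos rfl]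
          · ring
          · intro hsub
            apply hP
            intro j hji hja
            have := hsub j (by
              rwa [Finsupp.tsub_apply, Finsupp.single_apply, if_neg (Ne.symm hji), Nat.sub_zero])
            exact this
      · rw [if_neg hka]
        by_cases hle : Finsupp.single i k ≤ a
        · rw [if_pos hle, ih, if_neg]
          · ring
          · intro hsub
            apply hka
            have h1 : k ≤ a i := Finsupp.single_le_iff.mp hle
            by_contra h2
            have hne : a i - k ≠ 0 := by omega
            have := hsub i (by
              rwa [Finsupp.tsub_apply, Finsupp.single_apply, if_pos rfl])
            exact hiS this
        · rw [if_neg hle]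
    rw [Finset.sum_congr rfl hterm, Finset.sum_ite_eq' (Finset.range (d i + 1))]
    by_cases hai : a i ∈ Finset.range (d i + 1)
    · rw [if_pos hai]
      by_cases hP : ∀ j ≠ i, a j ≠ 0 → j ∈ S
      · rw [if_pos hP, if_pos, Finset.prod_insert hiS, mul_comm]
        intro j hj
        by_cases hji : j = i
        · subst hji; exact Finset.mem_insert_self j S
        · exact Finset.mem_insert_of_mem (hP j hji hj)
      · rw [if_neg hP, if_neg]
        intro hsub
        exact hP fun j hji hja => (Finset.mem_insert.mp (hsub j hja)).resolve_left hji
    · rw [if_neg hai]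
      by_cases hsub : ∀ j, a j ≠ 0 → j ∈ insert i S
      · rw [if_pos hsub, Finset.prod_insert hiS]
        have : (d i).choose (a i) = 0 := Nat.choose_eq_zero_of_lt (by
          simpa using (Finset.mem_range.not.mp hai))
        rw [this]
        simp
      · rw [if_neg hsub]

lemma coeff_aeval_add_one (g : MvPolynomial (Fin n) F) (a : Fin n →₀ ℕ) :
    coeff a (aeval (fun j => (X j + 1 : MvPolynomial (Fin n) F)) g) =
      ∑ d ∈ g.support, coeff d g * ∏ j : Fin n, ((d j).choose (a j) : F) := by
  conv_lhs => rw [g.as_sum, map_sum, coeff_sum]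
  refine Finset.sum_congr rfl fun d hd => ?_
  rw [aeval_monomial, Finsupp.prod_pow, algebraMap_eq, coeff_C_mul,
    coeff_prod_X_add_one_pow, if_pos (fun j _ => Finset.mem_univ j)]

lemma prod_X_pow_univ (μ : Fin n →₀ ℕ) :
    ∏ j : Fin n, (X j : MvPolynomial (Fin n) F) ^ μ j = monomial μ 1 := by
  rw [← prod_X_pow_eq_monomial]
  exact (Finset.prod_subset (Finset.subset_univ _) fun j _ hj => by
    rw [Finsupp.notMem_support_iff.mp hj, pow_zero]).symm

/-- Codeword test via Hasse derivatives: for the monomial-like code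
`C = ⟨(x₁−1)^{m₁}⋯(x_n−1)^{m_n}⟩ ⊆ F_q[x]/⟨x_j^{p^{s_j}}−1⟩` and a degree-bounded polynomial
`g`, the class of `g` lies in `C` iff the Hasse derivative of `g` in direction `a` evaluated
at `(1,…,1)` vanishes for every `a ∈ Q = Q₁ ∪ ⋯ ∪ Q_n`, where
`Q_ℓ = {a : a_ℓ < m_ℓ and a_j < p^{s_j} for all j ≠ ℓ}`. The evaluated Hasse derivative is
`Σ_d g_d · C(d₁,a₁)⋯C(d_n,a_n)`. -/
theorem stmt_18 (p : ℕ) (hp : p.Prime) (F : Type) [Field F] [Fintype F] [CharP F p]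
    (n : ℕ) (s m : Fin n → ℕ) (hs : ∀ j, 0 < s j) (hm : ∀ j, 0 < m j)
    (hm' : ∀ j, m j ≤ p ^ s j)
    (I : Ideal (MvPolynomial (Fin n) F))
    (hI : I = Ideal.span (Set.range fun j : Fin n => X j ^ p ^ s j - 1))
    (C : Ideal (MvPolynomial (Fin n) F ⧸ I))
    (hC : C = Ideal.span {Ideal.Quotient.mk I (∏ j : Fin n, (X j - 1) ^ m j)})
    (g : MvPolynomial (Fin n) F) (hg : ∀ j, degreeOf j g < p ^ s j) :
    Ideal.Quotient.mk I g ∈ C ↔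
      ∀ a : Fin n → ℕ, (∃ ℓ, a ℓ < m ℓ ∧ ∀ j ≠ ℓ, a j < p ^ s j) →
        ∑ d ∈ g.support, coeff d g * ∏ j : Fin n, ((d j).choose (a j) : F) = 0 := by
  classical
  haveI : Fact p.Prime := ⟨hp⟩
  set e : MvPolynomial (Fin n) F ≃ₐ[F] MvPolynomial (Fin n) F :=
    AlgEquiv.ofAlgHom (aeval fun j => X j + 1) (aeval fun j => X j - 1)
      (by apply MvPolynomial.algHom_ext; intro i; simp)
      (by apply MvPolynomial.algHom_ext; intro i; simp) with he
  set μ : Fin n →₀ ℕ := Finsupp.equivFunOnFinite.symm m with hμ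
  set T : Set (Fin n →₀ ℕ) :=
    insert μ (Set.range fun j : Fin n => Finsupp.single j (p ^ s j)) with hT
  -- Step 1: reduce to membership in a sup ideal
  have h1 : Ideal.Quotient.mk I g ∈ C ↔
      g ∈ Ideal.span {∏ j : Fin n, (X j - 1) ^ m j} ⊔ I := by
    rw [hC, ← Set.image_singleton, ← Ideal.map_span, Ideal.mem_quotient_iff_mem_sup]
  -- Step 2: transport via the ring equivalence e
  have h2 : g ∈ Ideal.span {∏ j : Fin n, (X j - 1) ^ m j} ⊔ I ↔
      e.toRingEquiv g ∈
        (Ideal.span {∏ j : Fin n, (X j - 1) ^ m j} ⊔ I).map e.toRingEquiv :=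
    (Ideal.apply_mem_of_equiv_iff).symm
  -- Step 3: compute the mapped ideal as a monomial ideal
  have hX : ∀ j : Fin n, e.toRingEquiv (X j - 1) = X j := by
    intro j
    show (aeval fun j => X j + 1) (X j - 1) = X j
    simp
  have heM : e.toRingEquiv (∏ j : Fin n, (X j - 1) ^ m j) = monomial μ (1 : F) := by
    rw [map_prod]
    simp_rw [map_pow, hX]
    rw [← prod_X_pow_univ μ]
    rfl
  have heI : ∀ j : Fin n, e.toRingEquiv (X j ^ p ^ s j - 1) =
      monomial (Finsupp.single j (p ^ s j)) (1 : F) := by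
    intro j
    show (aeval fun j => X j + 1) (X j ^ p ^ s j - 1) = _
    rw [map_sub, map_pow, aeval_X, map_one, add_pow_char_pow, one_pow,
      add_sub_cancel_right, X_pow_eq_monomial]
  have himg : (⇑e.toRingEquiv '' Set.range fun j : Fin n => X j ^ p ^ s j - 1) =
      Set.range fun j : Fin n => monomial (Finsupp.single j (p ^ s j)) (1 : F) := by
    rw [← Set.range_comp]
    apply congrArg Set.range
    funext j
    exact heI j
  have h3 : (Ideal.span {∏ j : Fin n, (X j - 1) ^ m j} ⊔ I).map e.toRingEquiv =
      Ideal.span ((fun s => monomial s (1 : F)) '' T) := by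
    rw [hI, Ideal.map_sup, Ideal.map_span, Ideal.map_span, Set.image_singleton, heM,
      himg, hT, Set.image_insert_eq, Ideal.span_insert, ← Set.range_comp]
    rfl
  rw [h1, h2, h3, mem_ideal_span_monomial_image]
  -- Step 4: translate support conditions into coefficient vanishing
  have hcoeff : ∀ a : Fin n →₀ ℕ, coeff a (e.toRingEquiv g) =
      ∑ d ∈ g.support, coeff d g * ∏ j : Fin n, ((d j).choose (a j) : F) :=
    fun a => coeff_aeval_add_one g a
  constructor
  · intro hsup a ha
    obtain ⟨ℓ, hℓ1, hℓ2⟩ := ha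
    set a' : Fin n →₀ ℕ := Finsupp.equivFunOnFinite.symm a with ha'
    have haj : ∀ j, a' j = a j := fun j => rfl
    rw [show (∑ d ∈ g.support, coeff d g * ∏ j : Fin n, ((d j).choose (a j) : F))
        = coeff a' (e.toRingEquiv g) from (hcoeff a').symm]
    by_contra hne
    obtain ⟨si, hsi, hle⟩ := hsup a' (mem_support_iff.mpr hne)
    rcases hsi with rfl | ⟨j, rfl⟩
    · have : m ℓ ≤ a ℓ := by
        have := Finsupp.le_def.mp hle ℓ
        rwa [haj] at this
      omega
    · have hj : p ^ s j ≤ a j := by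
        have := Finsupp.single_le_iff.mp hle
        rwa [haj] at this
      by_cases hjl : j = ℓ
      · subst hjl
        have := hm' j
        omega
      · have := hℓ2 j hjl
        omega
  · intro hco d hd
    by_contra hnot
    push_neg at hnot
    have hbox : ∀ j, d j < p ^ s j := by
      intro j
      have := hnot (Finsupp.single j (p ^ s j)) (Set.mem_insert_of_mem _ ⟨j, rfl⟩)
      have h2' : ¬ p ^ s j ≤ d j := fun h => this (Finsupp.single_le_iff.mpr h)
      omega
    have hμd : ¬ μ ≤ d := hnot μ (Set.mem_insert _ _)
    obtain ⟨ℓ, hℓ⟩ : ∃ ℓ, ¬ m ℓ ≤ d ℓ := by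
      by_contra h
      push_neg at h
      exact hμd (Finsupp.le_def.mpr fun j => h j)
    have hz := hco ⇑d ⟨ℓ, Nat.lt_of_not_le hℓ, fun j _ => hbox j⟩
    rw [← hcoeff d] at hz
    exact mem_support_iff.mp hd hz
end
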